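/- Let F_N be the N×N Fourier matrix, (F_N)_{ij} = w^{ij} with w = e^{2πi/N} and indices in ℤ/Nℤ, and let r ≥ 1. Then the truncation matrix X^{(r)} of F_N is given by X^{(r)}_{a₁…a_r, b₁…b_r} = 1 if a₁ − b₁ = a₂ − b₂ = ⋯ = a_r − b_r in ℤ/Nℤ, and 0 otherwise. -/

import Mathlib

open Matrix BigOperators ComplexConjugate

/-- The Fourier matrix `F_N = (w^{ij})`, `w = e^{2πi/N}`, indices in `ℤ/Nℤ`. -/
noncomputable def fourierMat (N : ℕ) : Matrix (ZMod N) (ZMod N) ℂ :=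
  fun i j => Complex.exp (2 * Real.pi * Complex.I * (i.val * j.val) / N)

/-- The profile matrix of `H`: `Q_{ab,cd} = (1/N)·∑_i H_{ia}·H_{id}·conj(H_{ib}·H_{ic})`. -/
noncomputable def profile {I : Type*} [Fintype I] (H : Matrix I I ℂ) (a b c d : I) : ℂ :=
  (Fintype.card I : ℂ)⁻¹ * ∑ i, H i a * H i d * conj (H i b * H i c)

/-- The truncation matrix of order `r`:
`X_{a₁…a_r,b₁…b_r} = Q_{a₁b₁,a₂b₂}⋯Q_{a_rb_r,a₁b₁}` (cyclic indices, via `finRotate`). -/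
noncomputable def trunc {I : Type*} [Fintype I] (H : Matrix I I ℂ) (r : ℕ) :
    Matrix (Fin r → I) (Fin r → I) ℂ :=
  fun a b => ∏ s : Fin r,
    profile H (a s) (b s) (a (finRotate r s)) (b (finRotate r s))

lemma fourierMat_eq (N : ℕ) [NeZero N] (i j : ZMod N) :
    fourierMat N i j = ZMod.stdAddChar (i * j) := by
  have h : ((i.val * j.val : ℤ) : ZMod N) = i * j := by push_cast [ZMod.natCast_val]; simp
  rw [← h, ZMod.stdAddChar_coe, fourierMat]
  push_cast
  ring_nf

lemma conj_stdAddChar {N : ℕ} [NeZero N] (x : ZMod N) :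
    conj (ZMod.stdAddChar x) = ZMod.stdAddChar (-x) := by
  rw [ZMod.stdAddChar_apply, ZMod.stdAddChar_apply, AddChar.map_neg_eq_inv,
    ← Circle.coe_inv_eq_conj, Circle.coe_inv]

lemma profile_fourier (N : ℕ) [NeZero N] (a b c d : ZMod N) :
    profile (fourierMat N) a b c d = if a - b = c - d then 1 else 0 := by
  have key : ∀ i : ZMod N, fourierMat N i a * fourierMat N i d *
      conj (fourierMat N i b * fourierMat N i c) =
      ZMod.stdAddChar (i * (a + d - b - c)) := by
    intro i
    simp only [fourierMat_eq, _root_.map_mul, conj_stdAddChar]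
    rw [← AddChar.map_add_eq_mul, ← AddChar.map_add_eq_mul, ← AddChar.map_add_eq_mul]
    ring_nf
  rw [profile]
  simp only [key]
  rw [AddChar.sum_mulShift _ (ZMod.isPrimitive_stdAddChar N)]
  have hc : (Fintype.card (ZMod N) : ℂ) ≠ 0 := by
    simp [ZMod.card, Nat.cast_ne_zero, NeZero.ne N]
  have hiff : a + d - b - c = 0 ↔ a - b = c - d := by
    constructor <;> intro h <;> linear_combination h
  split_ifs with h1 h2 h2
  · exact inv_mul_cancel₀ hc
  · exact absurd (hiff.mp h1) h2
  · exact absurd (hiff.mpr h2) h1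
  · simp

/-- the truncation matrix of the Fourier matrix `F_N` is given by
`X^{(r)}_{a₁…a_r,b₁…b_r} = δ_{a₁−b₁,…,a_r−b_r}`, equal to `1` when all the differences
`a_s − b_s` coincide in `ℤ/Nℤ` and to `0` otherwise. -/
theorem trunc_fourier (N : ℕ) [NeZero N] (r : ℕ) (hr : 1 ≤ r)
    (a b : Fin r → ZMod N) :
    trunc (fourierMat N) r a b =
      if ∀ s t : Fin r, a s - b s = a t - b t then 1 else 0 := by
  obtain ⟨m, rfl⟩ : ∃ m, r = m + 1 := ⟨r - 1, (Nat.succ_pred_eq_of_pos hr).symm⟩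
  set d : Fin (m + 1) → ZMod N := fun s => a s - b s with hd
  rw [trunc]
  simp only [profile_fourier]
  by_cases h : ∀ s t, a s - b s = a t - b t
  · rw [if_pos h]
    apply Finset.prod_eq_one
    intro s _
    rw [if_pos (h s _)]
  · rw [if_neg h]
    by_cases hc : ∀ s, a s - b s = a (finRotate (m + 1) s) - b (finRotate (m + 1) s)
    · exfalso
      apply h
      open Fin.NatCast in
      have step : ∀ (k : ℕ) (s : Fin (m + 1)), d s = d (s + (k : Fin (m + 1))) := by
        intro k
        induction k with
        | zero => simp
        | succ n ih =>
          intro s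
          have h1 : d s = d (s + 1) := by
            have := hc s
            rwa [finRotate_succ_apply] at this
          rw [h1, ih (s + 1)]
          congr 1
          push_cast
          exact (add_assoc _ _ _).trans (congrArg _ (add_comm _ _))
      intro s t
      have := step ((t - s).val) s
      rwa [Fin.cast_val_eq_self, add_sub_cancel] at this
    · push_neg at hc
      obtain ⟨s, hs⟩ := hc
      exact Finset.prod_eq_zero (Finset.mem_univ s) (if_neg hs)
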